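/- Let g be the real 6-dimensional Lie algebra with dual basis e¹,…,e⁶ satisfying de¹=de²=de³=0, de⁴=e¹∧e², de⁵=e¹∧e⁴, de⁶=e²∧e⁴ (the algebra h₁₆ = (0,0,0,12,14,24)). Suppose B ∈ ℂ with |B| = 1 and B ≠ 1, and let h be the Lie algebra determined by a (1,0)-basis ω¹,ω²,ω³ with dω¹ = 0, dω² = ω¹∧conj(ω¹), dω³ = ω¹∧ω² + B·ω¹∧conj(ω²). Then h is isomorphic to g. -/

import Mathlib

/-- `g ≅ h₁₆ = (0,0,0,12,14,24)`: there is a basis realizing the structure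
constants of `h₁₆` (`[e₁,e₂] = -e₄`, `[e₁,e₄] = -e₅`, `[e₂,e₄] = -e₆`,
other brackets zero). -/
def IsH16 (g : Type) [LieRing g] [LieAlgebra ℝ g] : Prop :=
  ∃ b : Module.Basis (Fin 6) ℝ g, ⁅b 0, b 1⁆ = -b 3 ∧ ⁅b 0, b 3⁆ = -b 4 ∧
    ⁅b 1, b 3⁆ = -b 5 ∧
    ⁅b 0, b 2⁆ = 0 ∧ ⁅b 0, b 4⁆ = 0 ∧ ⁅b 0, b 5⁆ = 0 ∧
    ⁅b 1, b 2⁆ = 0 ∧ ⁅b 1, b 4⁆ = 0 ∧ ⁅b 1, b 5⁆ = 0 ∧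
    ⁅b 2, b 3⁆ = 0 ∧ ⁅b 2, b 4⁆ = 0 ∧ ⁅b 2, b 5⁆ = 0 ∧
    ⁅b 3, b 4⁆ = 0 ∧ ⁅b 3, b 5⁆ = 0 ∧ ⁅b 4, b 5⁆ = 0

/-- Proposition 2.16 (second part): the Lie algebra determined by
`dω¹ = 0`, `dω² = ω¹∧ω̄¹`, `dω³ = ω¹∧ω² + B ω¹∧ω̄²` with `|B| = 1`, `B ≠ 1`
is isomorphic to `h₁₆`. -/
theorem stmt15 (g : Type) [LieRing g] [LieAlgebra ℝ g]
    (J : g →ₗ[ℝ] g) (hJ : ∀ X, J (J X) = -X)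
    (ω₁ ω₂ ω₃ : g →ₗ[ℝ] ℂ)
    (h1 : ∀ X, ω₁ (J X) = Complex.I * ω₁ X)
    (h2 : ∀ X, ω₂ (J X) = Complex.I * ω₂ X)
    (h3 : ∀ X, ω₃ (J X) = Complex.I * ω₃ X)
    (hcoord : Function.Bijective (fun X : g => (ω₁ X, ω₂ X, ω₃ X)))
    (B : ℂ) (hB : ‖B‖ = 1) (hB1 : B ≠ 1)
    (hd1 : ∀ X Y : g, ω₁ ⁅X, Y⁆ = 0)
    (hd2 : ∀ X Y : g, -ω₂ ⁅X, Y⁆ =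
      ω₁ X * (starRingEnd ℂ) (ω₁ Y) - ω₁ Y * (starRingEnd ℂ) (ω₁ X))
    (hd3 : ∀ X Y : g, -ω₃ ⁅X, Y⁆ =
      (ω₁ X * ω₂ Y - ω₁ Y * ω₂ X)
        + B * (ω₁ X * (starRingEnd ℂ) (ω₂ Y) - ω₁ Y * (starRingEnd ℂ) (ω₂ X))) :
    IsH16 g := by
  classical
  -- coordinate map
  set Φ : g →ₗ[ℝ] ℂ × ℂ × ℂ := ω₁.prod (ω₂.prod ω₃) with hΦdef
  have hΦbij : Function.Bijective Φ := hcoord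
  let E : g ≃ₗ[ℝ] ℂ × ℂ × ℂ := LinearEquiv.ofBijective Φ hΦbij
  -- facts about B
  set C : ℂ := (starRingEnd ℂ) B with hCdef
  have hK : B - 1 ≠ 0 := sub_ne_zero.mpr hB1
  have hKc : C - 1 ≠ 0 := by
    intro h
    apply hK
    have hC1 : C = 1 := by linear_combination h
    have hB1' : B = 1 := by
      have := congrArg (starRingEnd ℂ) hC1
      simpa [hCdef] using this
    simp [hB1']
  have hBc : B * C = 1 := by
    rw [hCdef, Complex.mul_conj]
    norm_cast
    rw [Complex.normSq_eq_norm_sq, hB]; norm_num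
  have hns : Complex.normSq B = 1 := by
    rw [← Complex.sq_norm, hB]; norm_num
  have hre : B.re < 1 := by
    rcases lt_or_eq_of_le (hB ▸ Complex.re_le_norm B) with h | h
    · exact h
    · exfalso
      apply hB1
      have him : B.im = 0 := by
        have h2 : B.re * B.re + B.im * B.im = 1 := hns
        rw [← h] at h2
        nlinarith [sq_nonneg B.im]
      apply Complex.ext <;> simp [← h, him]
  set r : ℝ := 1 - B.re with hrdef
  have hr : 0 < r := by simp only [hrdef]; linarith
  have hrne : (r : ℂ) ≠ 0 := by simpa using ne_of_gt hr
  have hsum : B + C = 2 * (B.re : ℂ) := by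
    rw [hCdef]
    push_cast [Complex.add_conj]
    ring
  have hKK : (B - 1) * (C - 1) = 2 * (r : ℂ) := by
    push_cast [hrdef]
    linear_combination hBc - hsum
  have hI : Complex.I * Complex.I = -1 := Complex.I_mul_I
  -- coordinates of the basis vectors
  set t : Fin 6 → ℂ × ℂ × ℂ :=
    ![(-Complex.I * (C - 1), 0, 0), (C - 1, 0, 0),
      (0, 1 - B, 0), (0, -(4 * (r : ℂ)) * Complex.I, 0),
      (0, 0, 8 * (r : ℂ) ^ 2), (0, 0, 8 * (r : ℂ) ^ 2 * Complex.I)] with htdef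
  have ht0 : t 0 = (-Complex.I * (C - 1), 0, 0) := rfl
  have ht1 : t 1 = (C - 1, 0, 0) := rfl
  have ht2 : t 2 = (0, 1 - B, 0) := rfl
  have ht3 : t 3 = (0, -(4 * (r : ℂ)) * Complex.I, 0) := rfl
  have ht4 : t 4 = (0, 0, 8 * (r : ℂ) ^ 2) := rfl
  have ht5 : t 5 = (0, 0, 8 * (r : ℂ) ^ 2 * Complex.I) := rfl
  set v : Fin 6 → g := fun i => E.symm (t i) with hvdef
  have hEv : ∀ i, Φ (v i) = t i := fun i => E.apply_symm_apply (t i)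
  have hω1 : ∀ i, ω₁ (v i) = (t i).1 := fun i => congrArg Prod.fst (hEv i)
  have hω2 : ∀ i, ω₂ (v i) = (t i).2.1 := fun i => congrArg (fun p => p.2.1) (hEv i)
  have hω3 : ∀ i, ω₃ (v i) = (t i).2.2 := fun i => congrArg (fun p => p.2.2) (hEv i)
  have hinj : ∀ X Y : g, ω₁ X = ω₁ Y → ω₂ X = ω₂ Y → ω₃ X = ω₃ Y → X = Y := by
    intro X Y e1 e2 e3
    apply hΦbij.injective
    simp only [hΦdef, LinearMap.prod_apply, Pi.prod, Function.prod, e1, e2, e3]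
  have hω2b : ∀ X Y : g, ω₂ ⁅X, Y⁆ =
      -(ω₁ X * (starRingEnd ℂ) (ω₁ Y) - ω₁ Y * (starRingEnd ℂ) (ω₁ X)) := by
    intro X Y; linear_combination -hd2 X Y
  have hω3b : ∀ X Y : g, ω₃ ⁅X, Y⁆ =
      -((ω₁ X * ω₂ Y - ω₁ Y * ω₂ X)
        + B * (ω₁ X * (starRingEnd ℂ) (ω₂ Y) - ω₁ Y * (starRingEnd ℂ) (ω₂ X))) := by
    intro X Y; linear_combination -hd3 X Y
  -- conjugates of the coordinate entries
  have hconj0 : (starRingEnd ℂ) (-Complex.I * (C - 1)) = Complex.I * (B - 1) := by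
    rw [hCdef]
    simp only [map_mul, map_neg, map_sub, map_one, Complex.conj_I, Complex.conj_conj]
    ring
  have hconj1 : (starRingEnd ℂ) (C - 1) = B - 1 := by
    rw [hCdef]
    simp only [map_sub, map_one, Complex.conj_conj]
  have hconj2 : (starRingEnd ℂ) (1 - B) = 1 - C := by
    rw [hCdef]
    simp only [map_sub, map_one]
  have hconj3 : (starRingEnd ℂ) (-(4 * (r : ℂ)) * Complex.I) = 4 * (r : ℂ) * Complex.I := by
    simp only [map_mul, map_neg, Complex.conj_I, map_ofNat, Complex.conj_ofReal]
    ring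
  -- linear independence
  have hti : LinearIndependent ℝ t := by
    rw [Fintype.linearIndependent_iff]
    intro c hc
    rw [Fin.sum_univ_six, ht0, ht1, ht2, ht3, ht4, ht5] at hc
    simp only [Prod.smul_mk, Prod.mk_add_mk, Prod.mk_eq_zero, smul_zero, add_zero,
      zero_add] at hc
    obtain ⟨hc1, hc2, hc3⟩ := hc
    rw [Complex.real_smul, Complex.real_smul] at hc1 hc2 hc3
    have e1 : ((c 1 : ℂ) - c 0 * Complex.I) * (C - 1) = 0 := by
      linear_combination hc1
    have e1' : (c 1 : ℂ) - c 0 * Complex.I = 0 :=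
      (mul_eq_zero.mp e1).resolve_right hKc
    have e2 : (c 2 : ℂ) * (1 - B) - 4 * r * c 3 * Complex.I = 0 := by
      linear_combination hc2
    have e3' : ((c 4 : ℂ) + c 5 * Complex.I) * (8 * (r : ℂ) ^ 2) = 0 := by
      linear_combination hc3
    have e3 : (c 4 : ℂ) + c 5 * Complex.I = 0 := by
      refine (mul_eq_zero.mp e3').resolve_right ?_
      intro h
      rcases mul_eq_zero.mp h with h | h
      · norm_num at h
      · exact hrne (pow_eq_zero_iff (by norm_num) |>.mp h)
    have h0 : c 0 = 0 := by
      have := congrArg Complex.im e1'; simpa using this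
    have h1' : c 1 = 0 := by
      have := congrArg Complex.re e1'; simpa using this
    have h2' : c 2 = 0 := by
      have h := congrArg Complex.re e2
      simp [Complex.sub_re, Complex.mul_re] at h
      rcases h with h | h
      · exact h
      · exfalso; simp only [hrdef] at hr; linarith
    have h3' : c 3 = 0 := by
      have h := congrArg Complex.im e2
      simp [Complex.sub_im, Complex.mul_im, h2'] at h
      rcases h with h | h
      · exfalso; exact (ne_of_gt hr) h
      · exact h
    have h4 : c 4 = 0 := by
      have := congrArg Complex.re e3; simpa using this
    have h5 : c 5 = 0 := by
      have := congrArg Complex.im e3; simpa using this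
    intro i; fin_cases i <;> assumption
  have hli : LinearIndependent ℝ v := hti.map' E.symm.toLinearMap E.symm.ker
  haveI : FiniteDimensional ℝ g := Module.Finite.equiv E.symm
  have hcard : Fintype.card (Fin 6) = Module.finrank ℝ g := by
    rw [E.finrank_eq]
    simp [Module.finrank_prod, Complex.finrank_real_complex]
  let b : Module.Basis (Fin 6) ℝ g := basisOfLinearIndependentOfCardEqFinrank hli hcard
  have hbv : ∀ k, b k = v k := fun k => by
    simp [b, coe_basisOfLinearIndependentOfCardEqFinrank]
  refine ⟨b, ?_, ?_, ?_, ?_, ?_, ?_, ?_, ?_, ?_, ?_, ?_, ?_, ?_, ?_, ?_⟩ <;>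
    simp only [hbv]
  -- [v0, v1] = -v3
  · apply hinj
    · simp [hd1, hω1, ht3]
    · rw [hω2b, map_neg, hω2 3, ht3, hω1 0, hω1 1, ht0, ht1, hconj0, hconj1]
      linear_combination (2 * Complex.I) * hKK
    · rw [hω3b, map_neg, hω3 3, ht3, hω1 0, hω1 1, hω2 0, hω2 1, ht0, ht1]
      simp
  -- [v0, v3] = -v4
  · apply hinj
    · simp [hd1, hω1, ht4]
    · rw [hω2b, map_neg, hω2 4, ht4, hω1 0, hω1 3, ht0, ht3]
      simp
    · rw [hω3b, map_neg, hω3 4, ht4, hω1 0, hω1 3, hω2 0, hω2 3, ht0, ht3, hconj3]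
      linear_combination (4 * (r:ℂ) * (C - 1) * (B - 1)) * hI - (4 * (r:ℂ)) * hKK
  -- [v1, v3] = -v5
  · apply hinj
    · simp [hd1, hω1, ht5]
    · rw [hω2b, map_neg, hω2 5, ht5, hω1 1, hω1 3, ht1, ht3]
      simp
    · rw [hω3b, map_neg, hω3 5, ht5, hω1 1, hω1 3, hω2 1, hω2 3, ht1, ht3, hconj3]
      linear_combination (-(4 * (r:ℂ) * Complex.I)) * hKK
  -- [v0, v2] = 0
  · apply hinj
    · simp [hd1]
    · rw [hω2b, map_zero, hω1 0, hω1 2, ht0, ht2]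
      simp
    · rw [hω3b, map_zero, hω1 0, hω1 2, hω2 0, hω2 2, ht0, ht2, hconj2]
      linear_combination (-(Complex.I * (C - 1))) * hBc
  -- [v0, v4] = 0
  · apply hinj
    · simp [hd1]
    · rw [hω2b, map_zero, hω1 0, hω1 4, ht0, ht4]; simp
    · rw [hω3b, map_zero, hω1 0, hω1 4, hω2 0, hω2 4, ht0, ht4]; simp
  -- [v0, v5] = 0
  · apply hinj
    · simp [hd1]
    · rw [hω2b, map_zero, hω1 0, hω1 5, ht0, ht5]; simp
    · rw [hω3b, map_zero, hω1 0, hω1 5, hω2 0, hω2 5, ht0, ht5]; simp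
  -- [v1, v2] = 0
  · apply hinj
    · simp [hd1]
    · rw [hω2b, map_zero, hω1 1, hω1 2, ht1, ht2]; simp
    · rw [hω3b, map_zero, hω1 1, hω1 2, hω2 1, hω2 2, ht1, ht2, hconj2]
      linear_combination (C - 1) * hBc
  -- [v1, v4] = 0
  · apply hinj
    · simp [hd1]
    · rw [hω2b, map_zero, hω1 1, hω1 4, ht1, ht4]; simp
    · rw [hω3b, map_zero, hω1 1, hω1 4, hω2 1, hω2 4, ht1, ht4]; simp
  -- [v1, v5] = 0
  · apply hinj
    · simp [hd1]
    · rw [hω2b, map_zero, hω1 1, hω1 5, ht1, ht5]; simp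
    · rw [hω3b, map_zero, hω1 1, hω1 5, hω2 1, hω2 5, ht1, ht5]; simp
  -- [v2, v3] = 0
  · apply hinj
    · simp [hd1]
    · rw [hω2b, map_zero, hω1 2, hω1 3, ht2, ht3]; simp
    · rw [hω3b, map_zero, hω1 2, hω1 3, hω2 2, hω2 3, ht2, ht3]; simp
  -- [v2, v4] = 0
  · apply hinj
    · simp [hd1]
    · rw [hω2b, map_zero, hω1 2, hω1 4, ht2, ht4]; simp
    · rw [hω3b, map_zero, hω1 2, hω1 4, hω2 2, hω2 4, ht2, ht4]; simp
  -- [v2, v5] = 0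
  · apply hinj
    · simp [hd1]
    · rw [hω2b, map_zero, hω1 2, hω1 5, ht2, ht5]; simp
    · rw [hω3b, map_zero, hω1 2, hω1 5, hω2 2, hω2 5, ht2, ht5]; simp
  -- [v3, v4] = 0
  · apply hinj
    · simp [hd1]
    · rw [hω2b, map_zero, hω1 3, hω1 4, ht3, ht4]; simp
    · rw [hω3b, map_zero, hω1 3, hω1 4, hω2 3, hω2 4, ht3, ht4]; simp
  -- [v3, v5] = 0
  · apply hinj
    · simp [hd1]
    · rw [hω2b, map_zero, hω1 3, hω1 5, ht3, ht5]; simp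
    · rw [hω3b, map_zero, hω1 3, hω1 5, hω2 3, hω2 5, ht3, ht5]; simp
  -- [v4, v5] = 0
  · apply hinj
    · simp [hd1]
    · rw [hω2b, map_zero, hω1 4, hω1 5, ht4, ht5]; simp
    · rw [hω3b, map_zero, hω1 4, hω1 5, hω2 4, hω2 5, ht4, ht5]; simp
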